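/- arXiv:2005.03099 — 4 statements merged into one kernel-verified Lean document; each statement's English description precedes it below -/
import Mathlib

section
/- For an elementary symmetric set, the center minimizes the sum of ν-th powers of distances: if ‖a − x_k‖ = d for all k = 1,…,N where a = (1/N)Σ_k x_k, and ν ≥ 2, then a minimizes F(c) = Σ_k ‖c − x_k‖^ν over ℝ^n. -/
theorem stmt_12 (n N : ℕ) (hN : 1 ≤ N) (x : Fin N → EuclideanSpace ℝ (Fin n))
    (a : EuclideanSpace ℝ (Fin n)) (ha : a = (N : ℝ)⁻¹ • ∑ k, x k)
    (d : ℝ) (hd : ∀ k, ‖a - x k‖ = d)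
    (ν : ℝ) (hν : 2 ≤ ν)
    (F : EuclideanSpace ℝ (Fin n) → ℝ)
    (hF : ∀ c, F c = ∑ k, ‖c - x k‖ ^ ν) :
    ∀ c, F a ≤ F c := by
  intro c
  have hNpos : (0:ℝ) < N := by exact_mod_cast hN
  have hNne : (N:ℝ) ≠ 0 := ne_of_gt hNpos
  haveI : Nonempty (Fin N) := ⟨⟨0, hN⟩⟩
  have hd0 : 0 ≤ d := (hd (Classical.arbitrary _)) ▸ norm_nonneg _
  -- sum of a - x k is zero
  have hsum0 : ∑ k, (a - x k) = 0 := by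
    rw [Finset.sum_sub_distrib, Finset.sum_const, Finset.card_univ, Fintype.card_fin, ha,
      ← Nat.cast_smul_eq_nsmul ℝ, smul_smul, mul_inv_cancel₀ hNne, one_smul, sub_self]
  -- variance identity (inequality)
  have hvar : (N:ℝ) * d ^ 2 ≤ ∑ k, ‖c - x k‖ ^ 2 := by
    have key : ∀ k : Fin N, ‖c - x k‖ ^ 2
        = ‖c - a‖ ^ 2 + 2 * inner ℝ (c - a) (a - x k) + ‖a - x k‖ ^ 2 := by
      intro k
      have : c - x k = (c - a) + (a - x k) := by abel
      rw [this, @norm_add_sq_real]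
    calc (N:ℝ) * d ^ 2 ≤ ‖c - a‖ ^ 2 * N + (N:ℝ) * d ^ 2 := by
          nlinarith [sq_nonneg ‖c - a‖]
      _ = ∑ k, ‖c - x k‖ ^ 2 := by
          rw [Finset.sum_congr rfl (fun k _ => key k)]
          rw [Finset.sum_add_distrib, Finset.sum_add_distrib]
          have h1 : ∑ k : Fin N, 2 * (inner ℝ (c - a) (a - x k) : ℝ) = 0 := by
            rw [← Finset.mul_sum, ← inner_sum, hsum0, inner_zero_right, mul_zero]
          have h2 : ∑ k : Fin N, ‖a - x k‖ ^ 2 = (N:ℝ) * d ^ 2 := by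
            simp [hd, Finset.card_univ, mul_comm]
          rw [h1, h2]
          simp [Finset.card_univ, mul_comm]
  -- Jensen with weights 1/N, p = ν/2
  have hp : (1:ℝ) ≤ ν / 2 := by linarith
  have jensen := Real.rpow_arith_mean_le_arith_mean_rpow Finset.univ
      (fun _ : Fin N => (N:ℝ)⁻¹) (fun k => ‖c - x k‖ ^ 2)
      (fun i _ => by positivity)
      (by simp [Finset.card_univ, mul_inv_cancel₀ hNne])
      (fun i _ => by positivity) hp
  have hpow : ∀ k : Fin N, (‖c - x k‖ ^ 2) ^ (ν / 2) = ‖c - x k‖ ^ ν := by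
    intro k
    rw [← Real.rpow_natCast ‖c - x k‖ 2, ← Real.rpow_mul (norm_nonneg _)]
    norm_num
    congr 1
    ring
  have hmean : d ^ 2 ≤ ∑ k, (N:ℝ)⁻¹ * ‖c - x k‖ ^ 2 := by
    rw [← Finset.mul_sum, inv_mul_eq_div, le_div_iff₀ hNpos]
    linarith
  have hdν : d ^ ν = (d ^ 2) ^ (ν / 2) := by
    rw [← Real.rpow_natCast d 2, ← Real.rpow_mul hd0]
    norm_num
    congr 1
    ring
  have step1 : (d ^ 2 : ℝ) ^ (ν / 2) ≤ (∑ k, (N:ℝ)⁻¹ * ‖c - x k‖ ^ 2) ^ (ν / 2) :=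
    Real.rpow_le_rpow (sq_nonneg d) hmean (by linarith)
  have step2 : (∑ k, (N:ℝ)⁻¹ * ‖c - x k‖ ^ 2) ^ (ν / 2)
      ≤ ∑ k, (N:ℝ)⁻¹ * ‖c - x k‖ ^ ν := by
    refine jensen.trans_eq ?_
    exact Finset.sum_congr rfl fun k _ => by rw [hpow k]
  have hFa : F a = (N:ℝ) * d ^ ν := by
    rw [hF]
    simp [hd, Finset.card_univ, mul_comm]
  rw [hFa, hF]
  have := step1.trans step2
  rw [← hdν, ← Finset.mul_sum] at this
  calc (N:ℝ) * d ^ ν ≤ (N:ℝ) * ((N:ℝ)⁻¹ * ∑ k, ‖c - x k‖ ^ ν) := by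
        exact mul_le_mul_of_nonneg_left this (le_of_lt hNpos)
    _ = ∑ k, ‖c - x k‖ ^ ν := by field_simp
end

section
/- For a symmetric set (union of elementary symmetric sets with common center a, with possibly different pathloss exponents ν_l ≥ 2 per subset), the common center a minimizes F(c) = Σ_l Σ_{k ∈ I_l} ‖c − x_k‖^{ν_l}. -/
theorem stmt_13 (n N L : ℕ) (x : Fin N → EuclideanSpace ℝ (Fin n))
    (grp : Fin N → Fin L) (hsurj : ∀ l, ∃ k, grp k = l)
    (a : EuclideanSpace ℝ (Fin n))
    (hcen : ∀ l : Fin L,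
      ((Finset.univ.filter fun k => grp k = l).card : ℝ)⁻¹ •
        ∑ k ∈ Finset.univ.filter fun k => grp k = l, x k = a)
    (d : Fin L → ℝ) (hd : ∀ k, ‖a - x k‖ = d (grp k))
    (ν : Fin L → ℝ) (hν : ∀ l, 2 ≤ ν l)
    (F : EuclideanSpace ℝ (Fin n) → ℝ)
    (hF : ∀ c, F c = ∑ k, ‖c - x k‖ ^ ν (grp k)) :
    ∀ c, F a ≤ F c := by
  intro c
  rw [hF, hF]
  rw [← Finset.sum_fiberwise Finset.univ grp
    (fun k => ‖a - x k‖ ^ ν (grp k)),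
    ← Finset.sum_fiberwise Finset.univ grp
    (fun k => ‖c - x k‖ ^ ν (grp k))]
  apply Finset.sum_le_sum
  intro l _
  set s := Finset.univ.filter fun k => grp k = l with hs
  have hmem : ∀ k ∈ s, grp k = l := fun k hk => (Finset.mem_filter.mp hk).2
  -- rewrite exponents
  rw [Finset.sum_congr rfl (fun k hk => by rw [hmem k hk] :
    ∀ k ∈ s, ‖a - x k‖ ^ ν (grp k) = ‖a - x k‖ ^ ν l),
    Finset.sum_congr rfl (fun k hk => by rw [hmem k hk] :
    ∀ k ∈ s, ‖c - x k‖ ^ ν (grp k) = ‖c - x k‖ ^ ν l)]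
  obtain ⟨k₀, hk₀⟩ := hsurj l
  have hk₀s : k₀ ∈ s := by simp [hs, hk₀]
  have hm : (0 : ℝ) < s.card := by
    exact_mod_cast Finset.card_pos.mpr ⟨k₀, hk₀s⟩
  have hd0 : 0 ≤ d l := by rw [← hk₀, ← hd k₀]; exact norm_nonneg _
  have hda : ∀ k ∈ s, ‖a - x k‖ = d l := fun k hk => by rw [hd k, hmem k hk]
  -- centroid
  have hsum : ∑ k ∈ s, x k = (s.card : ℝ) • a := by
    have := hcen l
    rw [← this, smul_smul, mul_inv_cancel₀ (ne_of_gt hm), one_smul]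
  have hzero : ∑ k ∈ s, (a - x k) = 0 := by
    rw [Finset.sum_sub_distrib, hsum, Finset.sum_const, ← Nat.cast_smul_eq_nsmul ℝ, sub_self]
  -- variance inequality
  have hvar : (s.card : ℝ) * d l ^ 2 ≤ ∑ k ∈ s, ‖c - x k‖ ^ 2 := by
    have expand : ∀ k, ‖c - x k‖ ^ 2
        = ‖c - a‖ ^ 2 + 2 * inner ℝ (c - a) (a - x k) + ‖a - x k‖ ^ 2 := by
      intro k
      have : c - x k = (c - a) + (a - x k) := by abel
      rw [this, @norm_add_sq_real]
    calc (s.card : ℝ) * d l ^ 2 = ∑ k ∈ s, ‖a - x k‖ ^ 2 := by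
          rw [Finset.sum_congr rfl (fun k hk => by rw [hda k hk]), Finset.sum_const,
            nsmul_eq_mul]
      _ ≤ ∑ k ∈ s, ‖c - x k‖ ^ 2 := by
          simp only [expand, Finset.sum_add_distrib, ← Finset.mul_sum, ← inner_sum, hzero,
            inner_zero_right, mul_zero, zero_add, Finset.sum_const, nsmul_eq_mul]
          nlinarith [mul_nonneg hm.le (sq_nonneg ‖c - a‖)]
  -- Jensen
  set p : ℝ := ν l / 2 with hp
  have hp1 : 1 ≤ p := by rw [hp]; linarith [hν l]
  have hrw : ∀ y : ℝ, (0 ≤ y) → (y ^ 2) ^ p = y ^ ν l := by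
    intro y hy
    rw [← Real.rpow_natCast y 2, ← Real.rpow_mul hy]
    rw [hp]
    congr 1
    ring
  have jensen := Real.rpow_arith_mean_le_arith_mean_rpow s (fun _ => (s.card : ℝ)⁻¹)
    (fun k => ‖c - x k‖ ^ 2) (fun _ _ => by positivity)
    (by rw [Finset.sum_const, nsmul_eq_mul, mul_inv_cancel₀ (ne_of_gt hm)])
    (fun _ _ => by positivity) hp1
  rw [← Finset.mul_sum, ← Finset.mul_sum] at jensen
  have h1 : (d l ^ 2) ^ p ≤ ((s.card : ℝ)⁻¹ * ∑ k ∈ s, ‖c - x k‖ ^ 2) ^ p := by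
    apply Real.rpow_le_rpow (by positivity) _ (by linarith)
    rw [le_inv_mul_iff₀ hm]; linarith [hvar]
  have h2 : (s.card : ℝ) * (d l ^ 2) ^ p ≤ ∑ k ∈ s, (‖c - x k‖ ^ 2) ^ p := by
    calc (s.card : ℝ) * (d l ^ 2) ^ p
        ≤ (s.card : ℝ) * (((s.card : ℝ)⁻¹ * ∑ k ∈ s, ‖c - x k‖ ^ 2) ^ p) :=
          mul_le_mul_of_nonneg_left h1 (le_of_lt hm)
      _ ≤ (s.card : ℝ) * ((s.card : ℝ)⁻¹ * ∑ k ∈ s, (‖c - x k‖ ^ 2) ^ p) :=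
          mul_le_mul_of_nonneg_left jensen (le_of_lt hm)
      _ = ∑ k ∈ s, (‖c - x k‖ ^ 2) ^ p := by
          rw [← mul_assoc, mul_inv_cancel₀ (ne_of_gt hm), one_mul]
  calc ∑ k ∈ s, ‖a - x k‖ ^ ν l = (s.card : ℝ) * (d l ^ 2) ^ p := by
        rw [hrw _ hd0, Finset.sum_congr rfl (fun k hk => by
          rw [hda k hk] : ∀ k ∈ s, ‖a - x k‖ ^ ν l = d l ^ ν l),
          Finset.sum_const, nsmul_eq_mul]
    _ ≤ ∑ k ∈ s, (‖c - x k‖ ^ 2) ^ p := h2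
    _ = ∑ k ∈ s, ‖c - x k‖ ^ ν l :=
        Finset.sum_congr rfl fun k _ => hrw _ (norm_nonneg _)
end

section
/- Elevated distance strict convexity: for h ≠ 0 and ν ≥ 1, the function f(c) = (‖c − x‖² + h²)^{ν/2} is strictly convex on ℝ^n. -/
set_option maxHeartbeats 1000000 in
theorem stmt_14 (n : ℕ) (x : EuclideanSpace ℝ (Fin n)) (h : ℝ) (hh : h ≠ 0)
    (ν : ℝ) (hν : 1 ≤ ν) :
    StrictConvexOn ℝ Set.univ
      (fun c : EuclideanSpace ℝ (Fin n) => (‖c - x‖ ^ 2 + h ^ 2) ^ (ν / 2)) := by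
  -- lift into the L2 product space
  set u : EuclideanSpace ℝ (Fin n) → WithLp 2 (EuclideanSpace ℝ (Fin n) × ℝ) :=
    fun c => (WithLp.equiv 2 _).symm (c - x, h) with hu
  have hfst : ∀ c, (u c).fst = c - x := fun c => rfl
  have hsnd : ∀ c, (u c).snd = h := fun c => rfl
  have hnorm : ∀ c, ‖u c‖ ^ 2 = ‖c - x‖ ^ 2 + h ^ 2 := by
    intro c
    rw [WithLp.prod_norm_sq_eq_of_L2, hfst, hsnd, Real.norm_eq_abs, sq_abs]
  have hrw : ∀ c : EuclideanSpace ℝ (Fin n),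
      (‖c - x‖ ^ 2 + h ^ 2) ^ (ν / 2) = ‖u c‖ ^ ν := by
    intro c
    rw [← hnorm c, ← Real.rpow_natCast (‖u c‖) 2, ← Real.rpow_mul (norm_nonneg _)]
    congr 1
    push_cast
    ring
  have hune : ∀ c, u c ≠ 0 := by
    intro c hc
    exact hh (by rw [← hsnd c, hc]; rfl)
  constructor
  · exact convex_univ
  · intro c₁ _ c₂ _ hne t s ht hs hts
    simp only [hrw]
    have hkey : u (t • c₁ + s • c₂) = t • u c₁ + s • u c₂ := by
      have h1 : (u (t • c₁ + s • c₂)).fst = (t • u c₁ + s • u c₂).fst := by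
        simp only [WithLp.add_fst, WithLp.smul_fst, hfst]
        rw [smul_sub, smul_sub]
        have : t • x + s • x = x := by rw [← add_smul, hts, one_smul]
        rw [sub_add_sub_comm, this]
      have h2 : (u (t • c₁ + s • c₂)).snd = (t • u c₁ + s • u c₂).snd := by
        simp only [WithLp.add_snd, WithLp.smul_snd, hsnd, smul_eq_mul,
          ← add_mul, hts, one_mul]
      exact WithLp.ofLp_injective 2 (Prod.ext h1 h2)
    have hray : ¬ SameRay ℝ (t • u c₁) (s • u c₂) := by
      intro hr
      have h1 : t • u c₁ ≠ 0 := smul_ne_zero ht.ne' (hune c₁)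
      have h2 : s • u c₂ ≠ 0 := smul_ne_zero hs.ne' (hune c₂)
      obtain ⟨r, hr0, hreq⟩ := hr.exists_pos_left h1 h2
      have hsnd' : (r * t) * h = s * h := by
        have := congrArg
          (fun z : WithLp 2 (EuclideanSpace ℝ (Fin n) × ℝ) => z.snd) hreq
        simpa [hsnd, mul_assoc] using this
      have hrt : r * t = s := mul_right_cancel₀ hh hsnd'
      have hfst' : (r * t) • (c₁ - x) = s • (c₂ - x) := by
        have := congrArg
          (fun z : WithLp 2 (EuclideanSpace ℝ (Fin n) × ℝ) => z.fst) hreq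
        simpa [hfst, mul_smul] using this
      rw [hrt] at hfst'
      have : c₁ - x = c₂ - x := smul_right_injective _ hs.ne' hfst'
      exact hne (sub_left_injective this)
    have hlt : ‖u (t • c₁ + s • c₂)‖ < t * ‖u c₁‖ + s * ‖u c₂‖ := by
      rw [hkey]
      calc ‖t • u c₁ + s • u c₂‖ < ‖t • u c₁‖ + ‖s • u c₂‖ :=
            norm_add_lt_of_not_sameRay hray
        _ = t * ‖u c₁‖ + s * ‖u c₂‖ := by
            rw [norm_smul, norm_smul, Real.norm_eq_abs, Real.norm_eq_abs,
              abs_of_pos ht, abs_of_pos hs]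
    have hν0 : 0 < ν := lt_of_lt_of_le one_pos hν
    calc ‖u (t • c₁ + s • c₂)‖ ^ ν < (t * ‖u c₁‖ + s * ‖u c₂‖) ^ ν :=
          Real.rpow_lt_rpow (norm_nonneg _) hlt hν0
      _ ≤ t * ‖u c₁‖ ^ ν + s * ‖u c₂‖ ^ ν := by
          have := (convexOn_rpow hν).2 (Set.mem_Ici.2 (norm_nonneg (u c₁)))
            (Set.mem_Ici.2 (norm_nonneg (u c₂))) ht.le hs.le hts
          simpa using this
      _ = t • ‖u c₁‖ ^ ν + s • ‖u c₂‖ ^ ν := by simp [smul_eq_mul]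
end

section
/- Uniqueness for elevated BS: for h ≠ 0, ν_k ≥ 1, β_k > 0, the function F(c) = Σ_k β_k (‖c − x_k‖² + h²)^{ν_k/2} has a unique global minimizer on ℝ^n. -/
open Filter

section Aux

variable {E : Type*} [NormedAddCommGroup E] [InnerProductSpace ℝ E]

/-- Key strict midpoint convexity of each term. -/
lemma key_strict (h : ℝ) (hh : h ≠ 0) (ν : ℝ) (hν : 1 ≤ ν) (xk p q : E) (hpq : p ≠ q) :
    (‖(1/2 : ℝ) • p + (1/2 : ℝ) • q - xk‖ ^ 2 + h ^ 2) ^ (ν / 2)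
      < ((‖p - xk‖ ^ 2 + h ^ 2) ^ (ν / 2) + (‖q - xk‖ ^ 2 + h ^ 2) ^ (ν / 2)) / 2 := by
  set V : E → WithLp 2 (E × ℝ) := fun c => (WithLp.equiv 2 (E × ℝ)).symm (c - xk, h) with hV
  have hVnorm : ∀ c : E, ‖c - xk‖ ^ 2 + h ^ 2 = ‖V c‖ ^ 2 := by
    intro c
    rw [WithLp.prod_norm_sq_eq_of_L2, hV]
    simp [WithLp.toLp_fst, WithLp.toLp_snd, Real.norm_eq_abs, sq_abs]
  have hpow : ∀ c : E, (‖c - xk‖ ^ 2 + h ^ 2) ^ (ν / 2) = ‖V c‖ ^ ν := by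
    intro c
    rw [hVnorm c, ← Real.rpow_natCast ‖V c‖ 2, ← Real.rpow_mul (norm_nonneg _)]
    congr 1
    push_cast
    ring
  set u : WithLp 2 (E × ℝ) := (1/2 : ℝ) • V p with hu
  set v : WithLp 2 (E × ℝ) := (1/2 : ℝ) • V q with hvv
  have hmid : V ((1/2 : ℝ) • p + (1/2 : ℝ) • q) = u + v := by
    apply (WithLp.equiv 2 (E × ℝ)).injective
    rw [hu, hvv, (show ∀ (a b : WithLp 2 (E × ℝ)), WithLp.equiv 2 (E × ℝ) (a + b) = WithLp.equiv 2 (E × ℝ) a + WithLp.equiv 2 (E × ℝ) b from fun _ _ => rfl), (show ∀ (r : ℝ) (w : WithLp 2 (E × ℝ)), WithLp.equiv 2 (E × ℝ) (r • w) = r • WithLp.equiv 2 (E × ℝ) w from fun _ _ => rfl), (show ∀ (r : ℝ) (w : WithLp 2 (E × ℝ)), WithLp.equiv 2 (E × ℝ) (r • w) = r • WithLp.equiv 2 (E × ℝ) w from fun _ _ => rfl), hV]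
    simp only [Equiv.apply_symm_apply, Prod.smul_mk, Prod.mk_add_mk, smul_eq_mul]
    refine Prod.ext ?_ (by ring)
    simp only [smul_sub]
    module
  have hu2 : (WithLp.equiv 2 (E × ℝ) u).2 = (1/2) * h := by
    rw [hu, (show ∀ (r : ℝ) (w : WithLp 2 (E × ℝ)), WithLp.equiv 2 (E × ℝ) (r • w) = r • WithLp.equiv 2 (E × ℝ) w from fun _ _ => rfl), hV]; simp
  have hv2 : (WithLp.equiv 2 (E × ℝ) v).2 = (1/2) * h := by
    rw [hvv, (show ∀ (r : ℝ) (w : WithLp 2 (E × ℝ)), WithLp.equiv 2 (E × ℝ) (r • w) = r • WithLp.equiv 2 (E × ℝ) w from fun _ _ => rfl), hV]; simp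
  have h2ne : (1/2 : ℝ) * h ≠ 0 := by simp [hh]
  have hu0 : u ≠ 0 := by
    intro h0
    apply h2ne
    rw [← hu2, h0]
    simp
  have hv0 : v ≠ 0 := by
    intro h0
    apply h2ne
    rw [← hv2, h0]
    simp
  have hray : ¬ SameRay ℝ u v := by
    intro hr
    obtain ⟨r, hr0, hruv⟩ := hr.exists_pos_left hu0 hv0
    have h2 : (WithLp.equiv 2 (E × ℝ) (r • u)).2 = (WithLp.equiv 2 (E × ℝ) v).2 := by
      rw [hruv]
    rw [(show ∀ (r : ℝ) (w : WithLp 2 (E × ℝ)), WithLp.equiv 2 (E × ℝ) (r • w) = r • WithLp.equiv 2 (E × ℝ) w from fun _ _ => rfl)] at h2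
    have hr1 : r * ((1/2) * h) = (1/2) * h := by
      simp only [Prod.smul_snd, smul_eq_mul, hu2, hv2] at h2; exact h2
    have hr1' : r = 1 :=
      mul_right_cancel₀ h2ne (by linarith : r * ((1/2) * h) = 1 * ((1/2) * h))
    subst hr1'
    rw [one_smul] at hruv
    have h1 : (WithLp.equiv 2 (E × ℝ) u).1 = (WithLp.equiv 2 (E × ℝ) v).1 := by rw [hruv]
    rw [hu, hvv, (show ∀ (r : ℝ) (w : WithLp 2 (E × ℝ)), WithLp.equiv 2 (E × ℝ) (r • w) = r • WithLp.equiv 2 (E × ℝ) w from fun _ _ => rfl), (show ∀ (r : ℝ) (w : WithLp 2 (E × ℝ)), WithLp.equiv 2 (E × ℝ) (r • w) = r • WithLp.equiv 2 (E × ℝ) w from fun _ _ => rfl), hV] at h1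
    simp only [Equiv.apply_symm_apply, Prod.smul_fst, Prod.smul_mk] at h1
    apply hpq
    have := smul_right_injective E (by norm_num : (1/2 : ℝ) ≠ 0) h1
    exact sub_left_injective this
  have hlt : ‖u + v‖ < ‖u‖ + ‖v‖ := norm_add_lt_of_not_sameRay hray
  have hnu : ‖u‖ = ‖V p‖ / 2 := by
    rw [hu, norm_smul]; simp [Real.norm_eq_abs]; ring
  have hnv : ‖v‖ = ‖V q‖ / 2 := by
    rw [hvv, norm_smul]; simp [Real.norm_eq_abs]; ring
  rw [hpow, hpow, hpow, hmid]
  have hννpos : (0:ℝ) < ν := lt_of_lt_of_le one_pos hν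
  calc ‖u + v‖ ^ ν < ((‖V p‖ + ‖V q‖) / 2) ^ ν := by
        apply Real.rpow_lt_rpow (norm_nonneg _) _ hννpos
        rw [hnu, hnv] at hlt; linarith
    _ = ((1/2 : ℝ) * ‖V p‖ + (1/2 : ℝ) * ‖V q‖) ^ ν := by ring_nf
    _ ≤ (1/2 : ℝ) * ‖V p‖ ^ ν + (1/2 : ℝ) * ‖V q‖ ^ ν := by
        have := (convexOn_rpow hν).2 (Set.mem_Ici.mpr (norm_nonneg (V p)))
          (Set.mem_Ici.mpr (norm_nonneg (V q))) (by norm_num : (0:ℝ) ≤ 1/2)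
          (by norm_num : (0:ℝ) ≤ 1/2) (by norm_num)
        simpa [smul_eq_mul] using this
    _ = (‖V p‖ ^ ν + ‖V q‖ ^ ν) / 2 := by ring

/-- lower bound: `(t^2+h^2)^{ν/2} ≥ t - 1` for `t ≥ 0`, `ν ≥ 1`. -/
lemma lower_bd (h : ℝ) (ν : ℝ) (hν : 1 ≤ ν) (t : ℝ) (ht : 0 ≤ t) :
    t - 1 ≤ (t ^ 2 + h ^ 2) ^ (ν / 2) := by
  have h1 : (t ^ 2) ^ (ν / 2) ≤ (t ^ 2 + h ^ 2) ^ (ν / 2) :=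
    Real.rpow_le_rpow (sq_nonneg t) (le_add_of_nonneg_right (sq_nonneg h)) (by linarith)
  have h2 : (t ^ 2) ^ (ν / 2) = t ^ ν := by
    rw [← Real.rpow_natCast t 2, ← Real.rpow_mul ht]
    congr 1
    push_cast
    ring
  rw [h2] at h1
  rcases le_or_gt t 1 with hle | hgt
  · have : (0:ℝ) ≤ t ^ ν := Real.rpow_nonneg ht ν
    linarith
  · have : t ^ (1:ℝ) ≤ t ^ ν := Real.rpow_le_rpow_of_exponent_le hgt.le hν
    rw [Real.rpow_one] at this
    linarith

end Aux

theorem stmt_15 (n N : ℕ) (hN : 1 ≤ N) (x : Fin N → EuclideanSpace ℝ (Fin n))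
    (β ν : Fin N → ℝ) (hβ : ∀ k, 0 < β k) (hν : ∀ k, 1 ≤ ν k)
    (h : ℝ) (hh : h ≠ 0)
    (F : EuclideanSpace ℝ (Fin n) → ℝ)
    (hF : ∀ c, F c = ∑ k, β k * (‖c - x k‖ ^ 2 + h ^ 2) ^ (ν k / 2)) :
    ∃! cstar, ∀ c, F cstar ≤ F c := by
  have hFfun : F = fun c => ∑ k, β k * (‖c - x k‖ ^ 2 + h ^ 2) ^ (ν k / 2) := funext hF
  subst hFfun
  set F : EuclideanSpace ℝ (Fin n) → ℝ :=
    fun c => ∑ k, β k * (‖c - x k‖ ^ 2 + h ^ 2) ^ (ν k / 2) with hFdef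
  have k0 : Fin N := ⟨0, hN⟩
  -- continuity
  have hcont : Continuous F := by
    apply continuous_finset_sum
    intro k _
    apply Continuous.mul continuous_const
    apply Continuous.rpow_const
    · exact (((continuous_id.sub continuous_const).norm.pow 2).add continuous_const)
    · intro c
      right
      have := hν k
      linarith
  -- coercivity
  have hterm_nonneg : ∀ (c : EuclideanSpace ℝ (Fin n)) (k : Fin N),
      0 ≤ β k * (‖c - x k‖ ^ 2 + h ^ 2) ^ (ν k / 2) := by
    intro c k
    apply mul_nonneg (hβ k).le
    apply Real.rpow_nonneg
    positivity
  have hLB : ∀ c, β k0 * (‖c‖ - (‖x k0‖ + 2)) ≤ F c := by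
    intro c
    have h1 : β k0 * (‖c - x k0‖ ^ 2 + h ^ 2) ^ (ν k0 / 2) ≤ F c :=
      Finset.single_le_sum (fun k _ => hterm_nonneg c k) (Finset.mem_univ k0)
    have h2 : ‖c - x k0‖ - 1 ≤ (‖c - x k0‖ ^ 2 + h ^ 2) ^ (ν k0 / 2) :=
      lower_bd h (ν k0) (hν k0) _ (norm_nonneg _)
    have h3 : ‖c‖ - (‖x k0‖ + 2) ≤ ‖c - x k0‖ - 1 := by
      have := norm_sub_norm_le c (x k0)
      have h4 : ‖c‖ - ‖x k0‖ ≤ ‖c - x k0‖ := by linarith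
      linarith
    have h5 : β k0 * (‖c‖ - (‖x k0‖ + 2)) ≤ β k0 * (‖c - x k0‖ ^ 2 + h ^ 2) ^ (ν k0 / 2) := by
      apply mul_le_mul_of_nonneg_left _ (hβ k0).le
      linarith
    linarith
  have hcoer : Tendsto F (cocompact _) atTop := by
    apply tendsto_atTop_mono hLB
    apply Tendsto.const_mul_atTop (hβ k0)
    apply tendsto_atTop_add_const_right
    exact tendsto_norm_cocompact_atTop
  obtain ⟨cstar, hmin⟩ := hcont.exists_forall_le hcoer
  refine ⟨cstar, hmin, fun y hy => ?_⟩
  by_contra hne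
  have hFeq : F y = F cstar := le_antisymm (hy cstar) (hmin y)
  set m : EuclideanSpace ℝ (Fin n) := (1/2 : ℝ) • y + (1/2 : ℝ) • cstar with hm
  have hstrict : F m < (F y + F cstar) / 2 := by
    rw [hFdef]
    simp only
    have hsum : ∑ k, (β k * (‖y - x k‖ ^ 2 + h ^ 2) ^ (ν k / 2)
        + β k * (‖cstar - x k‖ ^ 2 + h ^ 2) ^ (ν k / 2)) / 2
        = (∑ k, β k * (‖y - x k‖ ^ 2 + h ^ 2) ^ (ν k / 2)
          + ∑ k, β k * (‖cstar - x k‖ ^ 2 + h ^ 2) ^ (ν k / 2)) / 2 := by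
      rw [← Finset.sum_div, Finset.sum_add_distrib]
    rw [← hsum]
    apply Finset.sum_lt_sum_of_nonempty
    · have : Nonempty (Fin N) := ⟨k0⟩
      exact Finset.univ_nonempty
    · intro k _
      have hk := key_strict h hh (ν k) (hν k) (x k) y cstar hne
      have hb := hβ k
      calc β k * (‖m - x k‖ ^ 2 + h ^ 2) ^ (ν k / 2)
          < β k * (((‖y - x k‖ ^ 2 + h ^ 2) ^ (ν k / 2)
              + (‖cstar - x k‖ ^ 2 + h ^ 2) ^ (ν k / 2)) / 2) := by
            apply mul_lt_mul_of_pos_left _ hb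
            exact hk
        _ = (β k * (‖y - x k‖ ^ 2 + h ^ 2) ^ (ν k / 2)
              + β k * (‖cstar - x k‖ ^ 2 + h ^ 2) ^ (ν k / 2)) / 2 := by ring
        _ = (β k * (‖y - x k‖ ^ 2 + h ^ 2) ^ (ν k / 2)
              + β k * (‖cstar - x k‖ ^ 2 + h ^ 2) ^ (ν k / 2)) / 2 := rfl
  rw [hFeq] at hstrict
  have : F cstar ≤ F m := hmin m
  linarith
end
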